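/- For constants β > 0 and θ > 0, there exists a constant C > 0 such that for all s ≥ 0, e^{-θs} ∫₀ˢ e^{θr} r^{β-1} dr ≤ C · min(s^{β-1}, s^β). -/

import Mathlib

open MeasureTheory Real Set Filter

private lemma aux_rpow_intg (β : ℝ) (hβ : 0 < β) (s : ℝ) :
    IntegrableOn (fun r : ℝ => r ^ (β - 1)) (Set.Ioc 0 s) := by
  rcases le_or_gt s 0 with h | h
  · rw [Set.Ioc_eq_empty (not_lt.mpr h)]
    exact integrableOn_empty
  · have := intervalIntegral.intervalIntegrable_rpow' (a := 0) (b := s)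
      (by linarith : (-1:ℝ) < β - 1)
    rwa [intervalIntegrable_iff_integrableOn_Ioc_of_le h.le] at this

private lemma aux_intg (β θ s : ℝ) (hβ : 0 < β) (hθ : 0 < θ) :
    IntegrableOn (fun r : ℝ => Real.exp (θ * r) * r ^ (β - 1)) (Set.Ioc 0 s) := by
  refine ((aux_rpow_intg β hβ s).const_mul (Real.exp (θ * s))).mono' ((by fun_prop :
    Measurable fun r : ℝ => Real.exp (θ * r) * r ^ (β - 1)).aestronglyMeasurable) ?_
  filter_upwards [ae_restrict_mem measurableSet_Ioc] with r hr
  rw [Real.norm_eq_abs, abs_of_nonneg (mul_nonneg (Real.exp_nonneg _) (Real.rpow_nonneg hr.1.le _))]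
  exact mul_le_mul_of_nonneg_right
    (Real.exp_le_exp.2 (mul_le_mul_of_nonneg_left hr.2 hθ.le))
    (Real.rpow_nonneg hr.1.le _)

private lemma aux_int_rpow (β : ℝ) (hβ : 0 < β) (a : ℝ) (ha : 0 ≤ a) :
    ∫ r in Set.Ioc (0:ℝ) a, r ^ (β - 1) = a ^ β / β := by
  rw [← intervalIntegral.integral_of_le ha,
    integral_rpow (Or.inl (by linarith : (-1:ℝ) < β - 1))]
  rw [sub_add_cancel, Real.zero_rpow hβ.ne', sub_zero]

private lemma aux_int_exp (θ : ℝ) (hθ : 0 < θ) (a b : ℝ) (hab : a ≤ b) :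
    ∫ r in Set.Ioc a b, Real.exp (θ * r) = (Real.exp (θ * b) - Real.exp (θ * a)) / θ := by
  rw [← intervalIntegral.integral_of_le hab,
    intervalIntegral.integral_comp_mul_left (fun y => Real.exp y) hθ.ne',
    integral_exp]
  rw [smul_eq_mul]
  field_simp

theorem stmt1 (β θ : ℝ) (hβ : 0 < β) (hθ : 0 < θ) :
    ∃ C > (0:ℝ), ∀ s ≥ (0:ℝ),
      Real.exp (-θ * s) * (∫ r in Set.Ioc (0:ℝ) s, Real.exp (θ * r) * r ^ (β - 1))
        ≤ C * min (s ^ (β - 1)) (s ^ β) := by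
  set C₁ : ℝ := 1 / β with hC₁
  set C₂ : ℝ := 2 ^ (1 - β) / (θ * β) + (2 ^ (1 - β) + 1) / θ with hC₂
  have hC₁pos : (0:ℝ) < C₁ := by positivity
  have hC₂pos : (0:ℝ) < C₂ := by positivity
  refine ⟨C₁ + C₂, by positivity, ?_⟩
  intro s hs
  rcases eq_or_lt_of_le hs with rfl | hs0
  · simp only [Set.Ioc_self, Measure.restrict_empty, integral_zero_measure, mul_zero]
    have : min ((0:ℝ) ^ (β - 1)) ((0:ℝ) ^ β) = 0 := by
      rw [Real.zero_rpow hβ.ne']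
      exact min_eq_right (Real.rpow_nonneg le_rfl _)
    rw [this, mul_zero]
  have hintg := aux_intg β θ s hβ hθ
  -- Bound A : ≤ C₁ * s ^ β
  have boundA : Real.exp (-θ * s) * (∫ r in Set.Ioc (0:ℝ) s, Real.exp (θ * r) * r ^ (β - 1))
      ≤ C₁ * s ^ β := by
    have hmono : (∫ r in Set.Ioc (0:ℝ) s, Real.exp (θ * r) * r ^ (β - 1))
        ≤ ∫ r in Set.Ioc (0:ℝ) s, Real.exp (θ * s) * r ^ (β - 1) := by
      refine setIntegral_mono_on hintg ((aux_rpow_intg β hβ s).const_mul _)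
        measurableSet_Ioc ?_
      intro r hr
      exact mul_le_mul_of_nonneg_right
        (Real.exp_le_exp.2 (mul_le_mul_of_nonneg_left hr.2 hθ.le))
        (Real.rpow_nonneg hr.1.le _)
    calc Real.exp (-θ * s) * (∫ r in Set.Ioc (0:ℝ) s, Real.exp (θ * r) * r ^ (β - 1))
        ≤ Real.exp (-θ * s) * ∫ r in Set.Ioc (0:ℝ) s, Real.exp (θ * s) * r ^ (β - 1) :=
          mul_le_mul_of_nonneg_left hmono (Real.exp_nonneg _)
      _ = Real.exp (-θ * s) * (Real.exp (θ * s) * (s ^ β / β)) := by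
          rw [integral_const_mul, aux_int_rpow β hβ s hs]
      _ = C₁ * s ^ β := by
          rw [← mul_assoc, ← Real.exp_add, neg_mul, neg_add_cancel, Real.exp_zero, one_mul,
            hC₁, div_eq_mul_inv, div_eq_mul_inv, one_mul]
          ring
  -- Bound B : ≤ C₂ * s ^ (β - 1)
  have boundB : Real.exp (-θ * s) * (∫ r in Set.Ioc (0:ℝ) s, Real.exp (θ * r) * r ^ (β - 1))
      ≤ C₂ * s ^ (β - 1) := by
    have hhalf : (0:ℝ) < s / 2 := by linarith
    have hsplit : Set.Ioc (0:ℝ) s = Set.Ioc 0 (s/2) ∪ Set.Ioc (s/2) s :=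
      (Set.Ioc_union_Ioc_eq_Ioc (by linarith) (by linarith)).symm
    have hi1 : IntegrableOn (fun r : ℝ => Real.exp (θ * r) * r ^ (β - 1)) (Set.Ioc 0 (s/2)) :=
      hintg.mono_set (Set.Ioc_subset_Ioc le_rfl (by linarith))
    have hi2 : IntegrableOn (fun r : ℝ => Real.exp (θ * r) * r ^ (β - 1)) (Set.Ioc (s/2) s) :=
      hintg.mono_set (Set.Ioc_subset_Ioc hhalf.le le_rfl)
    have hsum : (∫ r in Set.Ioc (0:ℝ) s, Real.exp (θ * r) * r ^ (β - 1))
        = (∫ r in Set.Ioc (0:ℝ) (s/2), Real.exp (θ * r) * r ^ (β - 1))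
          + ∫ r in Set.Ioc (s/2) s, Real.exp (θ * r) * r ^ (β - 1) := by
      rw [hsplit]
      exact setIntegral_union (Set.Ioc_disjoint_Ioc_of_le le_rfl) measurableSet_Ioc hi1 hi2
    -- first piece
    have hb1 : (∫ r in Set.Ioc (0:ℝ) (s/2), Real.exp (θ * r) * r ^ (β - 1))
        ≤ Real.exp (θ * (s/2)) * ((s/2) ^ β / β) := by
      have : (∫ r in Set.Ioc (0:ℝ) (s/2), Real.exp (θ * r) * r ^ (β - 1))
          ≤ ∫ r in Set.Ioc (0:ℝ) (s/2), Real.exp (θ * (s/2)) * r ^ (β - 1) := by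
        refine setIntegral_mono_on hi1 ((aux_rpow_intg β hβ (s/2)).const_mul _)
          measurableSet_Ioc ?_
        intro r hr
        exact mul_le_mul_of_nonneg_right
          (Real.exp_le_exp.2 (mul_le_mul_of_nonneg_left hr.2 hθ.le))
          (Real.rpow_nonneg hr.1.le _)
      rwa [integral_const_mul, aux_int_rpow β hβ (s/2) hhalf.le] at this
    -- second piece
    have hb2 : (∫ r in Set.Ioc (s/2) s, Real.exp (θ * r) * r ^ (β - 1))
        ≤ ((s/2) ^ (β - 1) + s ^ (β - 1)) * (Real.exp (θ * s) / θ) := by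
      have hpt : ∀ r ∈ Set.Ioc (s/2) s, Real.exp (θ * r) * r ^ (β - 1)
          ≤ ((s/2) ^ (β - 1) + s ^ (β - 1)) * Real.exp (θ * r) := by
        intro r hr
        have hr0 : 0 < r := lt_trans hhalf hr.1
        have hbound : r ^ (β - 1) ≤ (s/2) ^ (β - 1) + s ^ (β - 1) := by
          rcases le_total 1 β with h1 | h1
          · have : r ^ (β - 1) ≤ s ^ (β - 1) :=
              Real.rpow_le_rpow hr0.le hr.2 (by linarith)
            have h2 : (0:ℝ) ≤ (s/2) ^ (β - 1) := Real.rpow_nonneg hhalf.le _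
            linarith
          · have : r ^ (β - 1) ≤ (s/2) ^ (β - 1) :=
              Real.rpow_le_rpow_of_nonpos hhalf hr.1.le (by linarith)
            have h2 : (0:ℝ) ≤ s ^ (β - 1) := Real.rpow_nonneg hs0.le _
            linarith
        calc Real.exp (θ * r) * r ^ (β - 1)
            ≤ Real.exp (θ * r) * ((s/2) ^ (β - 1) + s ^ (β - 1)) :=
              mul_le_mul_of_nonneg_left hbound (Real.exp_nonneg _)
          _ = ((s/2) ^ (β - 1) + s ^ (β - 1)) * Real.exp (θ * r) := by ring
      have hexp_intg : IntegrableOn (fun r : ℝ => Real.exp (θ * r)) (Set.Ioc (s/2) s) :=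
        (Real.continuous_exp.comp (continuous_const.mul continuous_id)).integrableOn_Ioc
      have hmono := setIntegral_mono_on hi2 (hexp_intg.const_mul _) measurableSet_Ioc hpt
      have hcoef : (0:ℝ) ≤ (s/2) ^ (β - 1) + s ^ (β - 1) := by
        have := Real.rpow_nonneg hhalf.le (β - 1)
        have := Real.rpow_nonneg hs0.le (β - 1)
        linarith
      calc (∫ r in Set.Ioc (s/2) s, Real.exp (θ * r) * r ^ (β - 1))
          ≤ ∫ r in Set.Ioc (s/2) s, ((s/2) ^ (β - 1) + s ^ (β - 1)) * Real.exp (θ * r) := hmono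
        _ = ((s/2) ^ (β - 1) + s ^ (β - 1)) *
              ((Real.exp (θ * s) - Real.exp (θ * (s/2))) / θ) := by
            rw [integral_const_mul, aux_int_exp θ hθ (s/2) s (by linarith)]
        _ ≤ ((s/2) ^ (β - 1) + s ^ (β - 1)) * (Real.exp (θ * s) / θ) := by
            refine mul_le_mul_of_nonneg_left ?_ hcoef
            gcongr
            linarith [Real.exp_pos (θ * (s/2))]
    -- rpow algebra
    have h2pos : (0:ℝ) < (2:ℝ) ^ β := Real.rpow_pos_of_pos two_pos β
    have h2b : (2:ℝ) ^ (1 - β) = 2 / 2 ^ β := by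
      rw [Real.rpow_sub two_pos, Real.rpow_one]
    have hsb : s ^ (β - 1) = s ^ β / s := by
      rw [Real.rpow_sub hs0, Real.rpow_one]
    have hhalfb : (s/2) ^ β = s ^ β / 2 ^ β := Real.div_rpow hs0.le (by norm_num) β
    have hhalfb1 : (s/2) ^ (β - 1) = 2 ^ (1 - β) * s ^ (β - 1) := by
      rw [Real.div_rpow hs0.le (by norm_num), show (1:ℝ) - β = -(β - 1) by ring,
        Real.rpow_neg (by norm_num : (0:ℝ) ≤ 2)]
      field_simp
    have hA : Real.exp (-θ * s) * (Real.exp (θ * (s/2)) * ((s/2) ^ β / β))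
        ≤ 2 ^ (1 - β) / (θ * β) * s ^ (β - 1) := by
      have e1 : Real.exp (-θ * s) * Real.exp (θ * (s/2)) = Real.exp (-(θ * (s/2))) := by
        rw [← Real.exp_add]; ring_nf
      have e2 : Real.exp (-(θ * (s/2))) ≤ (θ * (s/2))⁻¹ := by
        rw [Real.exp_neg]
        exact inv_anti₀ (by positivity)
          (by linarith [Real.add_one_le_exp (θ * (s/2))])
      calc Real.exp (-θ * s) * (Real.exp (θ * (s/2)) * ((s/2) ^ β / β))
          = Real.exp (-(θ * (s/2))) * ((s/2) ^ β / β) := by rw [← e1]; ring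
        _ ≤ (θ * (s/2))⁻¹ * ((s/2) ^ β / β) :=
            mul_le_mul_of_nonneg_right e2 (by positivity)
        _ = 2 ^ (1 - β) / (θ * β) * s ^ (β - 1) := by
            rw [hhalfb, h2b, hsb]
            field_simp
    have hB : Real.exp (-θ * s) * (((s/2) ^ (β - 1) + s ^ (β - 1)) * (Real.exp (θ * s) / θ))
        = (2 ^ (1 - β) + 1) / θ * s ^ (β - 1) := by
      have ec : Real.exp (-θ * s) * Real.exp (θ * s) = 1 := by
        rw [← Real.exp_add]; simp
      calc Real.exp (-θ * s) * (((s/2) ^ (β - 1) + s ^ (β - 1)) * (Real.exp (θ * s) / θ))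
          = ((s/2) ^ (β - 1) + s ^ (β - 1)) / θ * (Real.exp (-θ * s) * Real.exp (θ * s)) := by
            ring
        _ = ((s/2) ^ (β - 1) + s ^ (β - 1)) / θ := by rw [ec, mul_one]
        _ = (2 ^ (1 - β) + 1) / θ * s ^ (β - 1) := by rw [hhalfb1]; ring
    calc Real.exp (-θ * s) * (∫ r in Set.Ioc (0:ℝ) s, Real.exp (θ * r) * r ^ (β - 1))
        = Real.exp (-θ * s) * (∫ r in Set.Ioc (0:ℝ) (s/2), Real.exp (θ * r) * r ^ (β - 1))
          + Real.exp (-θ * s) * ∫ r in Set.Ioc (s/2) s, Real.exp (θ * r) * r ^ (β - 1) := by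
          rw [hsum]; ring
      _ ≤ Real.exp (-θ * s) * (Real.exp (θ * (s/2)) * ((s/2) ^ β / β))
          + Real.exp (-θ * s) * (((s/2) ^ (β - 1) + s ^ (β - 1)) * (Real.exp (θ * s) / θ)) := by
          gcongr
      _ ≤ 2 ^ (1 - β) / (θ * β) * s ^ (β - 1) + (2 ^ (1 - β) + 1) / θ * s ^ (β - 1) := by
          rw [hB]; linarith [hA]
      _ = C₂ * s ^ (β - 1) := by rw [hC₂]; ring
  have hmin1 : (0:ℝ) ≤ s ^ (β - 1) := Real.rpow_nonneg hs0.le _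
  have hmin2 : (0:ℝ) ≤ s ^ β := Real.rpow_nonneg hs0.le _
  rcases le_total (s ^ (β - 1)) (s ^ β) with hm | hm
  · rw [min_eq_left hm]
    calc _ ≤ C₂ * s ^ (β - 1) := boundB
      _ ≤ (C₁ + C₂) * s ^ (β - 1) := by nlinarith
  · rw [min_eq_right hm]
    calc _ ≤ C₁ * s ^ β := boundA
      _ ≤ (C₁ + C₂) * s ^ β := by nlinarith
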